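/- If a_• = (a_1, a_2, a_3, a_4) is a reduced Schubert problem, then a_1 = a_2 = a_3 = a_4; moreover, for every positive integer a, K(a, a, a, a) = 1 + a. -/

import Mathlib

/-- The Kostka number `K(a₁,…,aₘ)` of the two-rowed rectangular shape `(s,s)`,
where `2s = a₁ + ⋯ + aₘ`: the number of semistandard Young tableaux with two rows
of length `s` (entries weakly increasing along rows, strictly increasing down
columns) containing exactly `aᵢ` entries equal to `i`.  A tableau is encoded as
`T : Fin 2 → Fin s → Fin m`, where the value `T r c` encodes the entry `(T r c) + 1`
in row `r`, column `c`.  If the sum of the entries is odd, the Kostka number is `0`. -/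
noncomputable def kostka (a : List ℕ) : ℕ :=
  if a.sum % 2 = 0 then
    Nat.card {T : Fin 2 → Fin (a.sum / 2) → Fin a.length //
      (∀ r, Monotone (T r)) ∧
      (∀ c, T 0 c < T 1 c) ∧
      (∀ i : Fin a.length,
        Nat.card {p : Fin 2 × Fin (a.sum / 2) // T p.1 p.2 = i} = a.get i)}
  else 0

open Finset

lemma fv0 : ((0 : Fin 4) : ℕ) = 0 := rfl
lemma fv1 : ((1 : Fin 4) : ℕ) = 1 := rfl
lemma fv2 : ((2 : Fin 4) : ℕ) = 2 := rfl
lemma fv3 : ((3 : Fin 4) : ℕ) = 3 := rfl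

/-- count of entries of `f` with value `v` (as a natural number). -/
def cnt {n : ℕ} (f : Fin n → Fin 4) (v : ℕ) : ℕ :=
  (univ.filter (fun c => (f c : ℕ) = v)).card

/-- count of entries of `f` with value `< v`. -/
def cntlt {n : ℕ} (f : Fin n → Fin 4) (v : ℕ) : ℕ :=
  (univ.filter (fun c => (f c : ℕ) < v)).card

lemma cntlt_succ {n : ℕ} (f : Fin n → Fin 4) (v : ℕ) :
    cntlt f (v + 1) = cntlt f v + cnt f v := by
  unfold cntlt cnt
  rw [← Finset.card_union_of_disjoint]
  · congr 1
    ext c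
    simp only [Finset.mem_union, Finset.mem_filter, Finset.mem_univ, true_and]
    omega
  · rw [Finset.disjoint_filter]
    intro c _ h
    omega

lemma cntlt_zero {n : ℕ} (f : Fin n → Fin 4) : cntlt f 0 = 0 := by
  unfold cntlt; simp

lemma cntlt_four {n : ℕ} (f : Fin n → Fin 4) : cntlt f 4 = n := by
  unfold cntlt
  have : (univ.filter (fun c => (f c : ℕ) < 4)) = univ := by
    ext c; simp [(f c).isLt]
  rw [this, Finset.card_univ, Fintype.card_fin]

lemma cnt_total {n : ℕ} (f : Fin n → Fin 4) :
    cnt f 0 + cnt f 1 + cnt f 2 + cnt f 3 = n := by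
  have h0 := cntlt_zero f
  have h1 : cntlt f 1 = cntlt f 0 + cnt f 0 := cntlt_succ f 0
  have h2 : cntlt f 2 = cntlt f 1 + cnt f 1 := cntlt_succ f 1
  have h3 : cntlt f 3 = cntlt f 2 + cnt f 2 := cntlt_succ f 2
  have h4 : cntlt f 4 = cntlt f 3 + cnt f 3 := cntlt_succ f 3
  have h5 := cntlt_four f
  omega

/-- key: a monotone function is determined by its counts. -/
lemma key {n : ℕ} (f : Fin n → Fin 4) (hf : Monotone f) (v : ℕ) (c : Fin n) :
    v ≤ (f c : ℕ) ↔ cntlt f v ≤ (c : ℕ) := by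
  constructor
  · intro h
    unfold cntlt
    calc (univ.filter (fun j => (f j : ℕ) < v)).card
        ≤ (univ.filter (fun j : Fin n => j < c)).card := by
          apply Finset.card_le_card
          intro j hj
          simp only [Finset.mem_filter, Finset.mem_univ, true_and, Fin.lt_def] at *
          by_contra hjc
          push_neg at hjc
          have h2 : f c ≤ f j := hf (by rw [Fin.le_def]; omega)
          rw [Fin.le_def] at h2
          omega
      _ = (c : ℕ) := by
          have : (univ.filter (fun j : Fin n => j < c)) = Finset.Iio c := by
            ext j
            simp only [Finset.mem_filter, Finset.mem_univ, true_and, Finset.mem_Iio]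
          rw [this, Fin.card_Iio]
  · intro h
    by_contra hv
    push_neg at hv
    have hsub : (univ.filter (fun j : Fin n => j ≤ c)) ⊆
        (univ.filter (fun j => (f j : ℕ) < v)) := by
      intro j hj
      simp only [Finset.mem_filter, Finset.mem_univ, true_and] at *
      have h2 : f j ≤ f c := hf hj
      rw [Fin.le_def] at h2
      omega
    have hcard := Finset.card_le_card hsub
    have he : (univ.filter (fun j : Fin n => j ≤ c)) = Finset.Iic c := by
      ext j
      simp only [Finset.mem_filter, Finset.mem_univ, true_and, Finset.mem_Iic]
    rw [he, Fin.card_Iic] at hcard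
    unfold cntlt at h
    omega

lemma card_val_filter (n : ℕ) (q : ℕ → Prop) [DecidablePred q] :
    ((univ : Finset (Fin n)).filter (fun c => q c.val)).card =
      ((Finset.range n).filter q).card := by
  rw [Finset.card_filter, Finset.card_filter]
  exact Fin.sum_univ_eq_sum_range (fun i => if q i then 1 else 0) n

lemma cnt_interval (n l u : ℕ) (hu : u ≤ n) :
    ((univ : Finset (Fin n)).filter (fun c => l ≤ c.val ∧ c.val < u)).card = u - l := by
  rw [Finset.card_filter]
  rw [Fin.sum_univ_eq_sum_range (fun i => if l ≤ i ∧ i < u then 1 else 0) n]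
  rw [← Finset.card_filter]
  have : (Finset.range n).filter (fun c => l ≤ c ∧ c < u) = Finset.Ico l u := by
    ext c
    simp only [Finset.mem_filter, Finset.mem_range, Finset.mem_Ico]
    omega
  rw [this, Nat.card_Ico]

section Tableaux

variable (a : ℕ)

/-- the canonical tableau with `x` twos in the first row. -/
def canon (x : ℕ) : Fin 2 → Fin (2 * a) → Fin 4 := fun r c =>
  if r = 0 then
    if (c : ℕ) < a then 0 else if (c : ℕ) < a + x then 1 else 2
  else
    if (c : ℕ) < a - x then 1 else if (c : ℕ) < a then 2 else 3

lemma canon_zero (x : ℕ) (c : Fin (2 * a)) :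
    canon a x 0 c = if (c : ℕ) < a then 0 else if (c : ℕ) < a + x then 1 else 2 := rfl

lemma canon_one (x : ℕ) (c : Fin (2 * a)) :
    canon a x 1 c = if (c : ℕ) < a - x then 1 else if (c : ℕ) < a then 2 else 3 := rfl

lemma canon_mono (x : ℕ) (hx : x ≤ a) (r : Fin 2) : Monotone (canon a x r) := by
  intro c d hcd
  have hcd' : (c : ℕ) ≤ (d : ℕ) := hcd
  rcases r with ⟨rv, hrv⟩
  interval_cases rv
  · show canon a x 0 c ≤ canon a x 0 d
    rw [canon_zero, canon_zero, Fin.le_def]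
    split_ifs <;> simp only [fv0, fv1, fv2, fv3] <;> omega
  · show canon a x 1 c ≤ canon a x 1 d
    rw [canon_one, canon_one, Fin.le_def]
    split_ifs <;> simp only [fv0, fv1, fv2, fv3] <;> omega

lemma canon_col (x : ℕ) (hx : x ≤ a) (c : Fin (2 * a)) :
    canon a x 0 c < canon a x 1 c := by
  rw [canon_zero, canon_one, Fin.lt_def]
  split_ifs <;> simp only [fv0, fv1, fv2, fv3] <;> omega

lemma canon_cnt0 (x : ℕ) (hx : x ≤ a) :
    cnt (canon a x 0) 0 = a ∧ cnt (canon a x 0) 1 = x ∧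
    cnt (canon a x 0) 2 = a - x ∧ cnt (canon a x 0) 3 = 0 := by
  unfold cnt
  simp only [canon_zero]
  refine ⟨?_, ?_, ?_, ?_⟩
  · have h : ∀ c : Fin (2 * a), ∀ _ : c ∈ (univ : Finset (Fin (2 * a))),
        (((if (c : ℕ) < a then (0 : Fin 4) else if (c : ℕ) < a + x then 1 else 2) : Fin 4) : ℕ) = 0 ↔
        (0 ≤ c.val ∧ c.val < a) := by
      intro c _; have hc := c.isLt; split_ifs <;> simp <;> omega
    erw [Finset.filter_congr h, cnt_interval] <;> omega
  · have h : ∀ c : Fin (2 * a), ∀ _ : c ∈ (univ : Finset (Fin (2 * a))),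
        (((if (c : ℕ) < a then (0 : Fin 4) else if (c : ℕ) < a + x then 1 else 2) : Fin 4) : ℕ) = 1 ↔
        (a ≤ c.val ∧ c.val < a + x) := by
      intro c _; have hc := c.isLt; split_ifs <;> simp <;> omega
    erw [Finset.filter_congr h, cnt_interval] <;> omega
  · have h : ∀ c : Fin (2 * a), ∀ _ : c ∈ (univ : Finset (Fin (2 * a))),
        (((if (c : ℕ) < a then (0 : Fin 4) else if (c : ℕ) < a + x then 1 else 2) : Fin 4) : ℕ) = 2 ↔
        (a + x ≤ c.val ∧ c.val < 2 * a) := by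
      intro c _; have hc := c.isLt; split_ifs <;> simp <;> omega
    erw [Finset.filter_congr h, cnt_interval] <;> omega
  · have h : ∀ c : Fin (2 * a), ∀ _ : c ∈ (univ : Finset (Fin (2 * a))),
        (((if (c : ℕ) < a then (0 : Fin 4) else if (c : ℕ) < a + x then 1 else 2) : Fin 4) : ℕ) = 3 ↔
        (0 ≤ c.val ∧ c.val < 0) := by
      intro c _; have hc := c.isLt; split_ifs <;> simp <;> omega
    erw [Finset.filter_congr h, cnt_interval] <;> omega

lemma canon_cnt1 (x : ℕ) (hx : x ≤ a) :
    cnt (canon a x 1) 0 = 0 ∧ cnt (canon a x 1) 1 = a - x ∧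
    cnt (canon a x 1) 2 = x ∧ cnt (canon a x 1) 3 = a := by
  unfold cnt
  simp only [canon_one]
  refine ⟨?_, ?_, ?_, ?_⟩
  · have h : ∀ c : Fin (2 * a), ∀ _ : c ∈ (univ : Finset (Fin (2 * a))),
        (((if (c : ℕ) < a - x then (1 : Fin 4) else if (c : ℕ) < a then 2 else 3) : Fin 4) : ℕ) = 0 ↔
        (0 ≤ c.val ∧ c.val < 0) := by
      intro c _; have hc := c.isLt; split_ifs <;> simp <;> omega
    erw [Finset.filter_congr h, cnt_interval] <;> omega
  · have h : ∀ c : Fin (2 * a), ∀ _ : c ∈ (univ : Finset (Fin (2 * a))),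
        (((if (c : ℕ) < a - x then (1 : Fin 4) else if (c : ℕ) < a then 2 else 3) : Fin 4) : ℕ) = 1 ↔
        (0 ≤ c.val ∧ c.val < a - x) := by
      intro c _; have hc := c.isLt; split_ifs <;> simp <;> omega
    erw [Finset.filter_congr h, cnt_interval] <;> omega
  · have h : ∀ c : Fin (2 * a), ∀ _ : c ∈ (univ : Finset (Fin (2 * a))),
        (((if (c : ℕ) < a - x then (1 : Fin 4) else if (c : ℕ) < a then 2 else 3) : Fin 4) : ℕ) = 2 ↔
        (a - x ≤ c.val ∧ c.val < a) := by
      intro c _; have hc := c.isLt; split_ifs <;> simp <;> omega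
    erw [Finset.filter_congr h, cnt_interval] <;> omega
  · have h : ∀ c : Fin (2 * a), ∀ _ : c ∈ (univ : Finset (Fin (2 * a))),
        (((if (c : ℕ) < a - x then (1 : Fin 4) else if (c : ℕ) < a then 2 else 3) : Fin 4) : ℕ) = 3 ↔
        (a ≤ c.val ∧ c.val < 2 * a) := by
      intro c _; have hc := c.isLt; split_ifs <;> simp <;> omega
    erw [Finset.filter_congr h, cnt_interval] <;> omega

/-- The main counting step: any tableau with the good properties and counts equals a
canonical one. -/
lemma tableau_eq_canon (ha : 0 < a) (T : Fin 2 → Fin (2 * a) → Fin 4)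
    (hmono : ∀ r, Monotone (T r)) (hcol : ∀ c, T 0 c < T 1 c)
    (hcnt : ∀ v : ℕ, v < 4 → cnt (T 0) v + cnt (T 1) v = a) :
    ∃ x ≤ a, T = canon a x := by
  have h03 : cnt (T 0) 3 = 0 := by
    unfold cnt
    rw [Finset.card_eq_zero, Finset.filter_eq_empty_iff]
    intro c _
    have h := hcol c
    rw [Fin.lt_def] at h
    have := (T 1 c).isLt
    omega
  have h10 : cnt (T 1) 0 = 0 := by
    unfold cnt
    rw [Finset.card_eq_zero, Finset.filter_eq_empty_iff]
    intro c _
    have h := hcol c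
    rw [Fin.lt_def] at h
    omega
  have ht0 := cnt_total (T 0)
  have ht1 := cnt_total (T 1)
  have hc0 := hcnt 0 (by norm_num)
  have hc1 := hcnt 1 (by norm_num)
  have hc2 := hcnt 2 (by norm_num)
  have hc3 := hcnt 3 (by norm_num)
  set x := cnt (T 0) 1 with hxdef
  have hx : x ≤ a := by omega
  refine ⟨x, hx, ?_⟩
  have l01 : cntlt (T 0) 1 = cntlt (T 0) 0 + cnt (T 0) 0 := cntlt_succ _ 0
  have l02 : cntlt (T 0) 2 = cntlt (T 0) 1 + cnt (T 0) 1 := cntlt_succ _ 1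
  have l03 : cntlt (T 0) 3 = cntlt (T 0) 2 + cnt (T 0) 2 := cntlt_succ _ 2
  have l11 : cntlt (T 1) 1 = cntlt (T 1) 0 + cnt (T 1) 0 := cntlt_succ _ 0
  have l12 : cntlt (T 1) 2 = cntlt (T 1) 1 + cnt (T 1) 1 := cntlt_succ _ 1
  have l13 : cntlt (T 1) 3 = cntlt (T 1) 2 + cnt (T 1) 2 := cntlt_succ _ 2
  have z0 := cntlt_zero (T 0)
  have z1 := cntlt_zero (T 1)
  funext r c
  have hclt := c.isLt
  fin_cases r
  · have e1 := key (T 0) (hmono 0) 1 c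
    have e2 := key (T 0) (hmono 0) 2 c
    have e3 := key (T 0) (hmono 0) 3 c
    have hb := (T 0 c).isLt
    show T 0 c = canon a x 0 c
    rw [canon_zero]
    apply Fin.ext
    split_ifs <;> simp only [fv0, fv1, fv2] <;> omega
  · have e1 := key (T 1) (hmono 1) 1 c
    have e2 := key (T 1) (hmono 1) 2 c
    have e3 := key (T 1) (hmono 1) 3 c
    have hb := (T 1 c).isLt
    show T 1 c = canon a x 1 c
    rw [canon_one]
    apply Fin.ext
    split_ifs <;> simp only [fv1, fv2, fv3] <;> omega

end Tableaux

/-- pair count splits into row counts. -/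
lemma pair_count {n : ℕ} (T : Fin 2 → Fin n → Fin 4) (i : Fin 4) :
    Nat.card {p : Fin 2 × Fin n // T p.1 p.2 = i} =
      cnt (T 0) (i : ℕ) + cnt (T 1) (i : ℕ) := by
  rw [Nat.card_congr (Equiv.subtypeProdEquivSigmaSubtype (fun r c => T r c = i))]
  rw [Nat.card_eq_fintype_card, Fintype.card_sigma, Fin.sum_univ_two]
  unfold cnt
  congr 1 <;> rw [Fintype.card_subtype] <;> congr 1 <;> ext c <;>
    simp [Fin.ext_iff]

/-- A reduced Schubert problem `(a₁,a₂,a₃,a₄)` with four conditions has all entries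
equal; moreover for every positive integer `a`, `K(a,a,a,a) = 1 + a`. -/
theorem reduced_four_eq_and_kostka :
    (∀ a1 a2 a3 a4 s : ℕ,
      0 < a1 → 0 < a2 → 0 < a3 → 0 < a4 →
      a1 + a2 + a3 + a4 = 2 * s →
      a1 + a2 ≤ s → a1 + a3 ≤ s → a1 + a4 ≤ s →
      a2 + a3 ≤ s → a2 + a4 ≤ s → a3 + a4 ≤ s →
      a1 = a2 ∧ a2 = a3 ∧ a3 = a4) ∧
    (∀ a : ℕ, 0 < a → kostka [a, a, a, a] = 1 + a) := by
  constructor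
  · intro a1 a2 a3 a4 s _ _ _ _ hsum h12 h13 h14 h23 h24 h34
    omega
  · intro a ha
    unfold kostka
    have hsum : ([a, a, a, a] : List ℕ).sum = 4 * a := by simp; ring
    rw [if_pos (by omega)]
    have hdiv : ([a, a, a, a] : List ℕ).sum / 2 = 2 * a := by rw [hsum]; omega
    have hget : ∀ i : Fin ([a,a,a,a] : List ℕ).length, ([a,a,a,a] : List ℕ).get i = a := by
      intro i
      fin_cases i <;> rfl
    have hcard : Nat.card {x : ℕ // x ≤ a} = 1 + a := by
      rw [Nat.card_congr ((Equiv.subtypeEquivRight (fun x => (Nat.lt_succ_iff).symm)).trans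
        (Fin.equivSubtype).symm)]
      rw [Nat.card_eq_fintype_card, Fintype.card_fin]
      omega
    rw [← hcard]
    apply Nat.card_congr
    have e : {T : Fin 2 → Fin (([a,a,a,a] : List ℕ).sum / 2) → Fin ([a,a,a,a] : List ℕ).length //
        (∀ r, Monotone (T r)) ∧ (∀ c, T 0 c < T 1 c) ∧
        (∀ i, Nat.card {p : Fin 2 × Fin (([a,a,a,a] : List ℕ).sum / 2) // T p.1 p.2 = i}
          = ([a,a,a,a] : List ℕ).get i)} ≃
        {T : Fin 2 → Fin (2 * a) → Fin 4 //
        (∀ r, Monotone (T r)) ∧ (∀ c, T 0 c < T 1 c) ∧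
        (∀ i : Fin 4, Nat.card {p : Fin 2 × Fin (2 * a) // T p.1 p.2 = i} = a)} := by
      rw [hdiv]
      exact Equiv.subtypeEquivRight (fun T => by
        constructor
        · rintro ⟨h1, h2, h3⟩
          exact ⟨h1, h2, fun i => by rw [h3 i, hget i]⟩
        · rintro ⟨h1, h2, h3⟩
          exact ⟨h1, h2, fun i => by rw [h3 i, hget i]⟩)
    refine e.trans ?_
    refine Equiv.ofBijective (fun T => ⟨cnt (T.1 0) 1, ?_⟩) ⟨?_, ?_⟩
    · obtain ⟨T, hmono, hcol, hcnt⟩ := T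
      have hc : ∀ v : ℕ, v < 4 → cnt (T 0) v + cnt (T 1) v = a := by
        intro v hv
        have h := hcnt ⟨v, hv⟩
        rw [pair_count] at h
        exact h
      obtain ⟨x, hx, hT⟩ := tableau_eq_canon a ha T hmono hcol hc
      simp only
      rw [hT, (canon_cnt0 a x hx).2.1]
      exact hx
    · rintro ⟨T, hmono, hcol, hcnt⟩ ⟨S, hmono', hcol', hcnt'⟩ h
      simp only [Subtype.mk.injEq] at h ⊢
      have hcT : ∀ v : ℕ, v < 4 → cnt (T 0) v + cnt (T 1) v = a := by
        intro v hv; have h' := hcnt ⟨v, hv⟩; rwa [pair_count] at h'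
      have hcS : ∀ v : ℕ, v < 4 → cnt (S 0) v + cnt (S 1) v = a := by
        intro v hv; have h' := hcnt' ⟨v, hv⟩; rwa [pair_count] at h'
      obtain ⟨x, hx, hT⟩ := tableau_eq_canon a ha T hmono hcol hcT
      obtain ⟨y, hy, hS⟩ := tableau_eq_canon a ha S hmono' hcol' hcS
      have hxv : cnt (T 0) 1 = x := by rw [hT]; exact (canon_cnt0 a x hx).2.1
      have hyv : cnt (S 0) 1 = y := by rw [hS]; exact (canon_cnt0 a y hy).2.1
      rw [hT, hS]
      rw [hxv, hyv] at h
      rw [h]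
    · rintro ⟨x, hx⟩
      refine ⟨⟨canon a x, canon_mono a x hx, canon_col a x hx, ?_⟩, ?_⟩
      · intro i
        rw [pair_count]
        have h0 := canon_cnt0 a x hx
        have h1 := canon_cnt1 a x hx
        have hi : (i : ℕ) < 4 := i.isLt
        interval_cases h : (i : ℕ) <;> omega
      · simp only [Subtype.mk.injEq]
        rw [(canon_cnt0 a x hx).2.1]
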